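/- The posterior-mean estimator δ̂_opt defined by δ̂_opt(y) = (∫_Θ (δ/φ²) f(y|θ) π(θ) dθ)/(∫_Θ (1/φ²) f(y|θ) π(θ) dθ), with π(θ) = φ^{N+K−1}, is invariant: for all a > 0, b ∈ ℝ^{N+K}, c ∈ ℝ, δ̂_opt(a(y + Hb) + c·1) = a·δ̂_opt(y) + c, provided all the integrals are finite and the denominator is positive. -/

import Mathlib

open MeasureTheory
open scoped ENNReal NNReal

/-- The density `f(y|θ) = φ^{-2NP} f_v((y - δ·1)/φ - Hγ)` with `θ = (φ, γ, δ)`. -/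
noncomputable def densFam (N K P : ℕ) (f_v : (Fin (2*N*P) → ℝ) → ℝ)
    (H : Matrix (Fin (2*N*P)) (Fin (N+K)) ℝ)
    (y : Fin (2*N*P) → ℝ) (θ : ℝ × (Fin (N+K) → ℝ) × ℝ) : ℝ :=
  (θ.1 ^ (2*N*P))⁻¹ *
    f_v (θ.1⁻¹ • (y - θ.2.2 • (1 : Fin (2*N*P) → ℝ)) - H.mulVec θ.2.1)

/-- The posterior-mean offset estimator
`δ̂_opt(y) = (∫ (δ/φ²) f(y|θ) π(θ) dθ)/(∫ (1/φ²) f(y|θ) π(θ) dθ)` with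
`π(θ) = φ^{N+K-1}`, integrating over `Θ = ℝ⁺ × ℝ^{N+K} × ℝ`. -/
noncomputable def deltaOpt (N K P : ℕ) (f_v : (Fin (2*N*P) → ℝ) → ℝ)
    (H : Matrix (Fin (2*N*P)) (Fin (N+K)) ℝ) (y : Fin (2*N*P) → ℝ) : ℝ :=
  (∫ θ in {θ : ℝ × (Fin (N+K) → ℝ) × ℝ | 0 < θ.1},
      θ.2.2 / θ.1^2 * densFam N K P f_v H y θ * θ.1 ^ (N+K-1)) /
  (∫ θ in {θ : ℝ × (Fin (N+K) → ℝ) × ℝ | 0 < θ.1},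
      1 / θ.1^2 * densFam N K P f_v H y θ * θ.1 ^ (N+K-1))


-- smul prod lemmas
lemma my_smul_prod {α β : Type*} [MeasurableSpace α] [MeasurableSpace β]
    (μ : Measure α) (ν : Measure β) [SigmaFinite μ] [SigmaFinite ν] (c : ℝ≥0) :
    ((c : ℝ≥0∞) • μ).prod ν = (c : ℝ≥0∞) • (μ.prod ν) := by
  have h : ((c : ℝ≥0∞) • μ) = c • μ := rfl
  rw [h]
  refine Measure.prod_eq fun s t hs ht => ?_
  simp [Measure.prod_prod, mul_assoc]
  rw [ENNReal.smul_def, smul_eq_mul]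

lemma my_prod_smul {α β : Type*} [MeasurableSpace α] [MeasurableSpace β]
    (μ : Measure α) (ν : Measure β) [SigmaFinite μ] [SigmaFinite ν] (c : ℝ≥0) :
    μ.prod ((c : ℝ≥0∞) • ν) = (c : ℝ≥0∞) • (μ.prod ν) := by
  have h : ((c : ℝ≥0∞) • ν) = c • ν := rfl
  rw [h]
  refine Measure.prod_eq fun s t hs ht => ?_
  simp [Measure.prod_prod]; rw [ENNReal.smul_def, smul_eq_mul]; ring

lemma my_cov {n : ℕ} {a : ℝ} (ha : 0 < a) (b : Fin n → ℝ) (c : ℝ)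
    (g : ℝ × (Fin n → ℝ) × ℝ → ℝ)
    (hg : AEStronglyMeasurable g
      (volume.restrict {θ : ℝ × (Fin n → ℝ) × ℝ | 0 < θ.1})) :
    ∫ θ in {θ : ℝ × (Fin n → ℝ) × ℝ | 0 < θ.1}, g θ
      = (a * a) * ∫ θ in {θ : ℝ × (Fin n → ℝ) × ℝ | 0 < θ.1},
          g (a * θ.1, θ.2.1 + θ.1⁻¹ • b, a * θ.2.2 + c) := by
  set S : Set (ℝ × (Fin n → ℝ) × ℝ) := {θ | 0 < θ.1} with hSdef
  set T : ℝ × (Fin n → ℝ) × ℝ → ℝ × (Fin n → ℝ) × ℝ :=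
    fun θ => (a * θ.1, θ.2.1 + θ.1⁻¹ • b, a * θ.2.2 + c) with hTdef
  have hTm : Measurable T := by
    apply Measurable.prod (by fun_prop)
    apply Measurable.prod
    · exact (measurable_fst.comp measurable_snd).add
        ((measurable_fst.inv).smul measurable_const)
    · fun_prop
  have hS : MeasurableSet S := measurableSet_lt measurable_const measurable_fst
  have hpre : T ⁻¹' S = S := by
    ext θ
    simp only [hSdef, hTdef, Set.mem_preimage, Set.mem_setOf_eq]
    constructor
    · intro h; nlinarith
    · intro h; nlinarith
  -- shear part is measure preserving
  have hshear : MeasurePreserving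
      (fun θ : ℝ × (Fin n → ℝ) × ℝ => (θ.1, θ.2.1 + θ.1⁻¹ • b, θ.2.2))
      volume volume := by
    rw [MeasureTheory.Measure.volume_eq_prod]
    exact MeasurePreserving.skew_product (MeasurePreserving.id volume)
      (g := fun x (p : (Fin n → ℝ) × ℝ) => (p.1 + x⁻¹ • b, p.2))
      (by fun_prop)
      (Filter.Eventually.of_forall fun x => by
        rw [MeasureTheory.Measure.volume_eq_prod]
        exact ((measurePreserving_add_right volume (x⁻¹ • b)).prod
          (MeasurePreserving.id volume)).map_eq)
  set κ : ℝ≥0 := (a⁻¹).toNNReal with hκdef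
  have hofReal : ENNReal.ofReal |a⁻¹| = (κ : ℝ≥0∞) := by
    rw [abs_of_pos (by positivity)]; rfl
  have hmul : Measure.map (fun x : ℝ => a * x) volume = (κ : ℝ≥0∞) • volume := by
    rw [Real.map_volume_mul_left (ne_of_gt ha), hofReal]
  have haff : Measure.map (fun x : ℝ => a * x + c) volume = (κ : ℝ≥0∞) • volume := by
    have hc : (fun x : ℝ => a * x + c) = (fun x : ℝ => x + c) ∘ (fun x : ℝ => a * x) := rfl
    rw [hc, ← Measure.map_map (measurable_add_const c) (measurable_const_mul a), hmul,
      Measure.map_smul, (measurePreserving_add_right volume c).map_eq]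
  have hscale : Measure.map
      (fun θ : ℝ × (Fin n → ℝ) × ℝ => (a * θ.1, θ.2.1, a * θ.2.2 + c)) volume
      = (κ : ℝ≥0∞) • (κ : ℝ≥0∞) • volume := by
    rw [MeasureTheory.Measure.volume_eq_prod,
      MeasureTheory.Measure.volume_eq_prod (Fin n → ℝ) ℝ]
    have hinner : Measure.map (fun p : (Fin n → ℝ) × ℝ => (p.1, a * p.2 + c))
        ((volume : Measure (Fin n → ℝ)).prod (volume : Measure ℝ))
        = (κ : ℝ≥0∞) • ((volume : Measure (Fin n → ℝ)).prod (volume : Measure ℝ)) := by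
      have he : (fun p : (Fin n → ℝ) × ℝ => (p.1, a * p.2 + c))
          = Prod.map (id : (Fin n → ℝ) → (Fin n → ℝ)) (fun x : ℝ => a * x + c) := rfl
      rw [he, ← Measure.map_prod_map _ _ measurable_id (by fun_prop), Measure.map_id, haff,
        my_prod_smul]
    haveI : SigmaFinite ((κ : ℝ≥0∞) • ((volume : Measure (Fin n → ℝ)).prod (volume : Measure ℝ))) :=
      SMul.sigmaFinite κ
    have he2 : (fun θ : ℝ × (Fin n → ℝ) × ℝ => (a * θ.1, θ.2.1, a * θ.2.2 + c))
        = Prod.map (fun x : ℝ => a * x) (fun p : (Fin n → ℝ) × ℝ => (p.1, a * p.2 + c)) := rfl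
    rw [he2, ← Measure.map_prod_map _ _ (measurable_const_mul a) (by fun_prop), hmul, hinner,
      my_smul_prod, my_prod_smul]
  have hcomp : T = (fun θ : ℝ × (Fin n → ℝ) × ℝ => (a * θ.1, θ.2.1, a * θ.2.2 + c)) ∘
      (fun θ : ℝ × (Fin n → ℝ) × ℝ => (θ.1, θ.2.1 + θ.1⁻¹ • b, θ.2.2)) := rfl
  have hmap : Measure.map T volume = (κ : ℝ≥0∞) • (κ : ℝ≥0∞) • volume := by
    rw [hcomp, ← Measure.map_map (by fun_prop) hshear.measurable, hshear.map_eq, hscale]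
  have hrestrict : Measure.map T (volume.restrict S)
      = (κ : ℝ≥0∞) • (κ : ℝ≥0∞) • (volume.restrict S) := by
    conv_lhs => rw [← hpre]
    rw [← Measure.restrict_map hTm hS, hmap, Measure.restrict_smul, Measure.restrict_smul]
  have hg' : AEStronglyMeasurable g (Measure.map T (volume.restrict S)) := by
    rw [hrestrict]
    exact hg.mono_ac (Measure.smul_absolutelyContinuous.trans Measure.smul_absolutelyContinuous)
  have hκtoReal : ((κ : ℝ≥0∞)).toReal = a⁻¹ := by
    simp [hκdef, Real.coe_toNNReal _ (by positivity : (0:ℝ) ≤ a⁻¹)]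
  have key : ∫ θ in S, g (T θ) = (a⁻¹ * a⁻¹) * ∫ θ in S, g θ := by
    rw [← integral_map hTm.aemeasurable hg', hrestrict, integral_smul_measure,
      integral_smul_measure, hκtoReal, smul_eq_mul, smul_eq_mul]
    ring
  show ∫ θ in S, g θ = (a * a) * ∫ θ in S, g (T θ)
  rw [key, ← mul_assoc]
  have h1 : a * a * (a⁻¹ * a⁻¹) = 1 := by field_simp
  rw [h1, one_mul]

/-- the posterior-mean estimator `δ̂_opt` is invariant:
`δ̂_opt(a(y + Hb) + c·1) = a δ̂_opt(y) + c` for all `a > 0`, `b`, `c`, provided all the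
integrals are finite and the denominator is positive. -/
theorem stmt_17 (N K P : ℕ) (f_v : (Fin (2*N*P) → ℝ) → ℝ)
    (hfv_nonneg : ∀ x, 0 ≤ f_v x)
    (H : Matrix (Fin (2*N*P)) (Fin (N+K)) ℝ)
    (hnum : ∀ y : Fin (2*N*P) → ℝ, IntegrableOn
      (fun θ : ℝ × (Fin (N+K) → ℝ) × ℝ =>
        θ.2.2 / θ.1^2 * densFam N K P f_v H y θ * θ.1 ^ (N+K-1))
      {θ : ℝ × (Fin (N+K) → ℝ) × ℝ | 0 < θ.1})
    (hden : ∀ y : Fin (2*N*P) → ℝ, IntegrableOn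
      (fun θ : ℝ × (Fin (N+K) → ℝ) × ℝ =>
        1 / θ.1^2 * densFam N K P f_v H y θ * θ.1 ^ (N+K-1))
      {θ : ℝ × (Fin (N+K) → ℝ) × ℝ | 0 < θ.1})
    (hdenpos : ∀ y : Fin (2*N*P) → ℝ,
      0 < ∫ θ in {θ : ℝ × (Fin (N+K) → ℝ) × ℝ | 0 < θ.1},
            1 / θ.1^2 * densFam N K P f_v H y θ * θ.1 ^ (N+K-1)) :
    ∀ (a : ℝ) (b : Fin (N+K) → ℝ) (c : ℝ), 0 < a → ∀ y : Fin (2*N*P) → ℝ,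
      deltaOpt N K P f_v H (a • (y + H.mulVec b) + c • (1 : Fin (2*N*P) → ℝ))
        = a * deltaOpt N K P f_v H y + c := by
  intro a b c ha y
  have ha' : a ≠ 0 := ne_of_gt ha
  have hS : MeasurableSet {θ : ℝ × (Fin (N+K) → ℝ) × ℝ | 0 < θ.1} :=
    measurableSet_lt measurable_const measurable_fst
  set y' : Fin (2*N*P) → ℝ := a • (y + H.mulVec b) + c • (1 : Fin (2*N*P) → ℝ) with hy'
  have hdens : ∀ θ : ℝ × (Fin (N+K) → ℝ) × ℝ,
      densFam N K P f_v H y' (a * θ.1, θ.2.1 + θ.1⁻¹ • b, a * θ.2.2 + c)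
        = (a ^ (2*N*P))⁻¹ * densFam N K P f_v H y θ := by
    rintro ⟨φ, γ, δ⟩
    simp only [densFam]
    have h2 : (a * φ)⁻¹ • (y' - (a * δ + c) • (1 : Fin (2*N*P) → ℝ))
          - H.mulVec (γ + φ⁻¹ • b)
        = φ⁻¹ • (y - δ • (1 : Fin (2*N*P) → ℝ)) - H.mulVec γ := by
      rw [Matrix.mulVec_add, Matrix.mulVec_smul]
      have hy2 : y' - (a * δ + c) • (1 : Fin (2*N*P) → ℝ)
          = a • (y - δ • (1 : Fin (2*N*P) → ℝ) + H.mulVec b) := by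
        rw [hy']; module
      rw [hy2, mul_inv, smul_smul]
      have h3 : a⁻¹ * φ⁻¹ * a = φ⁻¹ := by
        rw [mul_comm a⁻¹ φ⁻¹, mul_assoc, inv_mul_cancel₀ ha', mul_one]
      rw [h3]
      module
    rw [h2, mul_pow, mul_inv]
    ring
  have hCapos : (0:ℝ) < a ^ (N+K-1) * (a^2)⁻¹ * (a^(2*N*P))⁻¹ := by positivity
  have hnum' : (∫ θ in {θ : ℝ × (Fin (N+K) → ℝ) × ℝ | 0 < θ.1},
        θ.2.2 / θ.1^2 * densFam N K P f_v H y' θ * θ.1 ^ (N+K-1))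
      = (a * a) * ((a ^ (N+K-1) * (a^2)⁻¹ * (a^(2*N*P))⁻¹) *
          (a * (∫ θ in {θ : ℝ × (Fin (N+K) → ℝ) × ℝ | 0 < θ.1},
              θ.2.2 / θ.1^2 * densFam N K P f_v H y θ * θ.1 ^ (N+K-1))
           + c * (∫ θ in {θ : ℝ × (Fin (N+K) → ℝ) × ℝ | 0 < θ.1},
              1 / θ.1^2 * densFam N K P f_v H y θ * θ.1 ^ (N+K-1)))) := by
    rw [my_cov ha b c _ (hnum y').aestronglyMeasurable]
    congr 1
    rw [setIntegral_congr_fun hS (g := fun θ : ℝ × (Fin (N+K) → ℝ) × ℝ =>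
        (a ^ (N+K-1) * (a^2)⁻¹ * (a^(2*N*P))⁻¹) *
          (a * (θ.2.2 / θ.1^2 * densFam N K P f_v H y θ * θ.1 ^ (N+K-1))
           + c * (1 / θ.1^2 * densFam N K P f_v H y θ * θ.1 ^ (N+K-1))))
      (fun θ hθ => by
        have hφ : (0:ℝ) < θ.1 := hθ
        simp only
        rw [hdens θ, mul_pow, mul_pow]
        field_simp)]
    rw [integral_const_mul, integral_add ((hnum y).const_mul a) ((hden y).const_mul c),
      integral_const_mul, integral_const_mul]
  have hden' : (∫ θ in {θ : ℝ × (Fin (N+K) → ℝ) × ℝ | 0 < θ.1},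
        1 / θ.1^2 * densFam N K P f_v H y' θ * θ.1 ^ (N+K-1))
      = (a * a) * ((a ^ (N+K-1) * (a^2)⁻¹ * (a^(2*N*P))⁻¹) *
          (∫ θ in {θ : ℝ × (Fin (N+K) → ℝ) × ℝ | 0 < θ.1},
              1 / θ.1^2 * densFam N K P f_v H y θ * θ.1 ^ (N+K-1))) := by
    rw [my_cov ha b c _ (hden y').aestronglyMeasurable]
    congr 1
    rw [setIntegral_congr_fun hS (g := fun θ : ℝ × (Fin (N+K) → ℝ) × ℝ =>
        (a ^ (N+K-1) * (a^2)⁻¹ * (a^(2*N*P))⁻¹) *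
          (1 / θ.1^2 * densFam N K P f_v H y θ * θ.1 ^ (N+K-1)))
      (fun θ hθ => by
        have hφ : (0:ℝ) < θ.1 := hθ
        simp only
        rw [hdens θ, mul_pow, mul_pow]
        field_simp)]
    rw [integral_const_mul]
  have hDe : (0:ℝ) < ∫ θ in {θ : ℝ × (Fin (N+K) → ℝ) × ℝ | 0 < θ.1},
      1 / θ.1^2 * densFam N K P f_v H y θ * θ.1 ^ (N+K-1) := hdenpos y
  simp only [deltaOpt]
  rw [hnum', hden', mul_div_mul_left _ _ (by positivity : a * a ≠ 0),
    mul_div_mul_left _ _ (ne_of_gt hCapos), add_div, mul_div_assoc,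
    mul_div_cancel_right₀ c (ne_of_gt hDe)]
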